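/- Let α, β : ℤ × ℤ → ℂ be double sequences such that β is antisymmetric (β(n,k) = −β(k,n) for all n,k), α(n,n) ≠ 0 for every integer n, and β(n,k) ≠ 0 whenever n ≠ k. Then α and β satisfy the quintuple sum identity (QSI) if and only if for all integers x, y, p: α(p,x)·β(y,p) + α(p,y)·β(p,x) + α(p,p)·β(x,y) = 0. -/
import Mathlib


/-- Lemma 3.2 (Wang–Ma): for antisymmetric `β` with `α n n ≠ 0` and
`β n k ≠ 0` for `n ≠ k`, the quintuple sum identity holds if and only if
`α p x * β y p + α p y * β p x + α p p * β x y = 0` for all integers `x, y, p`. -/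
theorem QSI_iff_three_term
    (α β : ℤ → ℤ → ℂ)
    (hanti : ∀ n k : ℤ, β n k = -β k n)
    (hα : ∀ n : ℤ, α n n ≠ 0)
    (hβ : ∀ n k : ℤ, n ≠ k → β n k ≠ 0) :
    (∀ x y p q : ℤ,
        α x p * α p y * β x p * β q y + α x p * α p x * β q y * β p y
          - α x y * α p y * β x p * β q p - α x y * α p q * β x p * β p y
          - α x x * α p p * β q y * β p y = 0)
      ↔ (∀ x y p : ℤ, α p x * β y p + α p y * β p x + α p p * β x y = 0) := by
  constructor
  · intro h x y p
    by_cases hpy : p = y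
    · subst hpy
      have hyy : β p p = 0 := by linear_combination (hanti p p) / 2
      linear_combination α p x * hyy + α p p * hanti p x
    · have hq := h y y p x
      have key : (α y y * β p y) *
          (α p x * β y p + α p y * β p x + α p p * β x y) = 0 := by
        linear_combination -hq
          + (α y p * α p y * β x y - α y y * α p y * β x p) * hanti y p
          + (α y y * α p y * β p y) * hanti p x
      exact (mul_eq_zero.mp key).resolve_left
        (mul_ne_zero (hα y) (hβ p y hpy))
  · intro h x y p q
    have h1 := h x y p
    have h2 := h p y x
    have h3 := h q y p
    rw [hanti y p, hanti p x] at h1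
    rw [hanti y x] at h2
    rw [hanti y p, hanti p q] at h3
    linear_combination (-(β q y * α x p)) * h1 - (β q y * α p p) * h2
      + (α x y * β x p) * h3
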